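/- Consider the MD LSTM Stable recursion where the truncated gradient satisfies ∂s^p/∂s^{p_in} = y_φ^p · ∑_{d=1}^D (∂s^{p_d^-}/∂s^{p_in}) · λ_d^p / (∑_{d'} λ_{d'}^p), with all y_φ^p ∈ [0,1] and all λ_d^p ∈ [0,1] with ∑_{d'} λ_{d'}^p > 0. Then by induction on ‖p - p_in‖_1, the truncated gradient ∂s^p/∂s^{p_in} lies in [0,1] for all p ≥ p_in. -/
import Mathlib


theorem stmt8 (D : ℕ) (pin : Fin D → ℕ) (g yφ : (Fin D → ℕ) → ℝ)
    (lam : (Fin D → ℕ) → Fin D → ℝ)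
    (hφ : ∀ p, yφ p ∈ Set.Icc (0:ℝ) 1)
    (hlam : ∀ p d, lam p d ∈ Set.Icc (0:ℝ) 1)
    (hS : ∀ p, 0 < ∑ d, lam p d)
    (hbase : g pin = 1)
    (hcausal : ∀ q, ¬ pin ≤ q → g q = 0)
    (hrec : ∀ p, pin ≤ p → p ≠ pin →
      g p = yφ p * ∑ d, (lam p d / ∑ d', lam p d') *
        (if 0 < p d then g (Function.update p d (p d - 1)) else 0)) :
    ∀ p, pin ≤ p → g p ∈ Set.Icc (0:ℝ) 1 := by
  suffices h : ∀ n p, (∑ d, p d) = n → pin ≤ p → g p ∈ Set.Icc (0:ℝ) 1 by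
    intro p hp; exact h _ p rfl hp
  intro n
  induction n using Nat.strong_induction_on with
  | _ n ih =>
    intro p hn hp
    by_cases hpe : p = pin
    · subst hpe; rw [hbase]; exact ⟨zero_le_one, le_refl 1⟩
    rw [hrec p hp hpe]
    -- each term is in [0,1]
    have hterm : ∀ d : Fin D,
        (if 0 < p d then g (Function.update p d (p d - 1)) else 0) ∈ Set.Icc (0:ℝ) 1 := by
      intro d
      split_ifs with hd
      · set q := Function.update p d (p d - 1) with hq
        by_cases hq2 : pin ≤ q
        · have hsum : (∑ e, q e) < n := by
            have : (∑ e, q e) + 1 = ∑ e, p e := by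
              rw [hq]
              rw [Finset.sum_update_of_mem (Finset.mem_univ d),
                Finset.sum_eq_sum_sdiff_singleton_add (Finset.mem_univ d) p]
              omega
            omega
          exact ih _ hsum q rfl hq2
        · rw [hcausal q hq2]; exact ⟨le_refl 0, zero_le_one⟩
      · exact ⟨le_refl 0, zero_le_one⟩
    have hS' := hS p
    have hratio : ∀ d : Fin D, 0 ≤ lam p d / ∑ d', lam p d' := fun d =>
      div_nonneg (hlam p d).1 hS'.le
    have hsum1 : (∑ d, lam p d / ∑ d', lam p d') = 1 := by
      rw [← Finset.sum_div]; exact div_self hS'.ne'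
    constructor
    · refine mul_nonneg (hφ p).1 (Finset.sum_nonneg fun d _ => ?_)
      exact mul_nonneg (hratio d) (hterm d).1
    · calc yφ p * ∑ d, (lam p d / ∑ d', lam p d') *
            (if 0 < p d then g (Function.update p d (p d - 1)) else 0)
          ≤ 1 * ∑ d, (lam p d / ∑ d', lam p d') * 1 := by
            refine mul_le_mul (hφ p).2 ?_ ?_ zero_le_one
            · exact Finset.sum_le_sum fun d _ =>
                mul_le_mul_of_nonneg_left (hterm d).2 (hratio d)
            · exact Finset.sum_nonneg fun d _ => mul_nonneg (hratio d) (hterm d).1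
      _ = 1 := by simp [hsum1]
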